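/- Let U : ℝ^N → ℝ be twice continuously differentiable, and suppose that for some λ > 0 and some positive weights w_1, ..., w_N > 0 the weighted monotonicity inequality Σ_i w_i (x_i − x'_i)(∂_i U(x) − ∂_i U(x')) ≥ λ Σ_i w_i (x_i − x'_i)² holds for all x, x' ∈ ℝ^N. Then the Hessian ∇²U(x) satisfies ⟨v, ∇²U(x) v⟩ ≥ λ ‖v‖² for the standard Euclidean inner product, for all x, v ∈ ℝ^N; equivalently, (x − x')·(∇U(x) − ∇U(x')) ≥ λ‖x − x'‖² in the standard (unweighted) inner product. -/

import Mathlib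

open Filter Topology

theorem eucl_decomp (N : ℕ) (v : EuclideanSpace ℝ (Fin N)) :
    v = ∑ i, v i • EuclideanSpace.single i 1 := by
  have h := (EuclideanSpace.basisFun (Fin N) ℝ).sum_repr v
  simp only [EuclideanSpace.basisFun_repr, EuclideanSpace.basisFun_apply] at h
  exact h.symm

theorem clm_decomp (N : ℕ) (L : EuclideanSpace ℝ (Fin N) →L[ℝ] ℝ) (v : EuclideanSpace ℝ (Fin N)) :
    L v = ∑ i, v i * L (EuclideanSpace.single i 1) := by
  conv_lhs => rw [eucl_decomp N v]
  simp

theorem key_lin (N : ℕ) (w : Fin N → ℝ) (hw : ∀ i, 0 < w i)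
    (T : EuclideanSpace ℝ (Fin N) →ₗ[ℝ] EuclideanSpace ℝ (Fin N))
    (hsymm : T.IsSymmetric)
    (hpos : ∀ v : EuclideanSpace ℝ (Fin N), 0 ≤ ∑ i, w i * (v i * T v i)) :
    ∀ v : EuclideanSpace ℝ (Fin N), 0 ≤ (inner ℝ v (T v) : ℝ) := by
  intro v
  have hn : Module.finrank ℝ (EuclideanSpace ℝ (Fin N)) = N := finrank_euclideanSpace_fin
  set b := hsymm.eigenvectorBasis hn with hb
  set μ := hsymm.eigenvalues hn with hμ
  have happ : ∀ i, T (b i) = μ i • b i := fun i => hsymm.apply_eigenvectorBasis hn i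
  have hμnn : ∀ i, 0 ≤ μ i := by
    intro i
    have h1 := hpos (b i)
    have h2 : ∑ j, w j * (b i j * T (b i) j) = μ i * ∑ j, w j * (b i j)^2 := by
      rw [happ i, Finset.mul_sum]
      refine Finset.sum_congr rfl fun j _ => ?_
      simp [PiLp.smul_apply, smul_eq_mul]; ring
    rw [h2] at h1
    have hbne : b i ≠ 0 := (hsymm.hasEigenvector_eigenvectorBasis hn i).2
    have hsum : 0 < ∑ j, w j * (b i j)^2 := by
      have hne : ∃ j, b i j ≠ 0 := by
        by_contra h
        push_neg at h
        exact hbne (by ext j; simpa using h j)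
      obtain ⟨j, hj⟩ := hne
      have : 0 < w j * (b i j)^2 := mul_pos (hw j) (by positivity)
      exact Finset.sum_pos' (fun k _ => mul_nonneg (hw k).le (sq_nonneg _))
        ⟨j, Finset.mem_univ j, this⟩
    nlinarith
  have hexp : (inner ℝ v (T v) : ℝ) = ∑ i, μ i * (inner ℝ v (b i) : ℝ)^2 := by
    rw [← b.sum_inner_mul_inner v (T v)]
    refine Finset.sum_congr rfl fun i _ => ?_
    have : (inner ℝ (b i) (T v) : ℝ) = μ i * (inner ℝ (b i) v : ℝ) := by
      rw [← hsymm (b i) v, happ i, inner_smul_left]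
      simp
    rw [this, real_inner_comm (b i) v]
    ring
  rw [hexp]
  exact Finset.sum_nonneg fun i _ => mul_nonneg (hμnn i) (sq_nonneg _)

theorem deriv_along (N : ℕ) (U : EuclideanSpace ℝ (Fin N) → ℝ) (hU : ContDiff ℝ 2 U)
    (x v u : EuclideanSpace ℝ (Fin N)) (t : ℝ) :
    HasDerivAt (fun s : ℝ => fderiv ℝ U (x + s • v) u)
      (fderiv ℝ (fderiv ℝ U) (x + t • v) v u) t := by
  have hf' : Differentiable ℝ (fderiv ℝ U) :=
    (hU.fderiv_right (m := 1) (by norm_num)).differentiable (by norm_num)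
  have h1 : HasDerivAt (fun s : ℝ => x + s • v) v t := by
    simpa using ((hasDerivAt_id t).smul_const v).const_add x
  have h3 := (hf' (x + t • v)).hasFDerivAt.comp_hasDerivAt t h1
  exact (ContinuousLinearMap.apply ℝ ℝ u).hasFDerivAt.comp_hasDerivAt t h3

theorem weighted_hess (N : ℕ) (U : EuclideanSpace ℝ (Fin N) → ℝ)
    (hU : ContDiff ℝ 2 U) (lam : ℝ)
    (w : Fin N → ℝ)
    (hmono : ∀ x x' : EuclideanSpace ℝ (Fin N),
      (∑ i, w i * ((x i - x' i) *
        (fderiv ℝ U x (EuclideanSpace.single i 1)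
          - fderiv ℝ U x' (EuclideanSpace.single i 1))))
        ≥ lam * ∑ i, w i * (x i - x' i) ^ 2)
    (x v : EuclideanSpace ℝ (Fin N)) :
    lam * ∑ i, w i * (v i) ^ 2 ≤
      ∑ i, w i * (v i * fderiv ℝ (fderiv ℝ U) x v (EuclideanSpace.single i 1)) := by
  set c := ∑ i, w i * (v i) ^ 2 with hc
  set F : ℝ → ℝ := fun t => ∑ i, w i * (v i * fderiv ℝ U (x + t • v) (EuclideanSpace.single i 1))
    with hF
  have hD : HasDerivAt F
      (∑ i, w i * (v i * fderiv ℝ (fderiv ℝ U) x v (EuclideanSpace.single i 1))) 0 := by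
    have : HasDerivAt F
        (∑ i, w i * (v i * fderiv ℝ (fderiv ℝ U) (x + (0:ℝ) • v) v (EuclideanSpace.single i 1)))
        0 := by
      apply HasDerivAt.fun_sum
      intro i _
      exact ((deriv_along N U hU x v (EuclideanSpace.single i 1) 0).const_mul (v i)).const_mul (w i)
    simpa using this
  have hslope : Tendsto (slope F 0) (𝓝[>] 0)
      (𝓝 (∑ i, w i * (v i * fderiv ℝ (fderiv ℝ U) x v (EuclideanSpace.single i 1)))) :=
    ((hasDerivAt_iff_tendsto_slope.1 hD).mono_left
      (nhdsWithin_mono _ fun t ht => ne_of_gt ht))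
  refine ge_of_tendsto hslope ?_
  filter_upwards [self_mem_nhdsWithin] with t ht
  have ht0 : (0:ℝ) < t := ht
  have key := hmono (x + t • v) x
  have hcoord : ∀ i : Fin N, (x + t • v) i - x i = t * v i := by
    intro i
    simp [PiLp.add_apply, PiLp.smul_apply, smul_eq_mul]
  have hL : (∑ i, w i * (((x + t • v) i - x i) *
      (fderiv ℝ U (x + t • v) (EuclideanSpace.single i 1)
        - fderiv ℝ U x (EuclideanSpace.single i 1)))) = t * (F t - F 0) := by
    rw [hF]
    simp only [hcoord]
    rw [← Finset.sum_sub_distrib, Finset.mul_sum]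
    refine Finset.sum_congr rfl fun i _ => ?_
    simp only [zero_smul, add_zero]
    ring
  have hR : (lam * ∑ i, w i * ((x + t • v) i - x i) ^ 2) = lam * t^2 * c := by
    rw [hc, Finset.mul_sum, Finset.mul_sum]
    refine Finset.sum_congr rfl fun i _ => ?_
    rw [hcoord i]; ring
  rw [hL, hR] at key
  have : lam * c ≤ (F t - F 0) / t := by
    rw [ge_iff_le] at key
    rw [le_div_iff₀ ht0]
    nlinarith
  simpa [slope_def_field] using this

theorem stmt_7 (N : ℕ) (U : EuclideanSpace ℝ (Fin N) → ℝ)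
    (hU : ContDiff ℝ 2 U) (lam : ℝ) (hlam : 0 < lam)
    (w : Fin N → ℝ) (hw : ∀ i, 0 < w i)
    (hmono : ∀ x x' : EuclideanSpace ℝ (Fin N),
      (∑ i, w i * ((x i - x' i) *
        (fderiv ℝ U x (EuclideanSpace.single i 1)
          - fderiv ℝ U x' (EuclideanSpace.single i 1))))
        ≥ lam * ∑ i, w i * (x i - x' i) ^ 2) :
    (∀ x v : EuclideanSpace ℝ (Fin N),
      iteratedFDeriv ℝ 2 U x ![v, v] ≥ lam * ‖v‖ ^ 2) ∧
    (∀ x x' : EuclideanSpace ℝ (Fin N),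
      (inner ℝ (x - x') (gradient U x - gradient U x') : ℝ) ≥ lam * ‖x - x'‖ ^ 2) := by
  have hd : Differentiable ℝ U := hU.differentiable (by norm_num)
  have hf' : Differentiable ℝ (fderiv ℝ U) :=
    (hU.fderiv_right (m := 1) (by norm_num)).differentiable (by norm_num)
  -- symmetry of the second derivative
  have hsymmB : ∀ x u v : EuclideanSpace ℝ (Fin N),
      fderiv ℝ (fderiv ℝ U) x u v = fderiv ℝ (fderiv ℝ U) x v u := by
    intro x u v
    exact second_derivative_symmetric (fun y => (hd y).hasFDerivAt)
      ((hf' x).hasFDerivAt) u v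
  -- the main quadratic bound
  have quad : ∀ x v : EuclideanSpace ℝ (Fin N),
      lam * ‖v‖ ^ 2 ≤ fderiv ℝ (fderiv ℝ U) x v v := by
    intro x v
    set B := fderiv ℝ (fderiv ℝ U) x with hB
    -- the shifted operator S = Hess - lam • id, as a linear map on Euclidean space
    set S : EuclideanSpace ℝ (Fin N) →ₗ[ℝ] EuclideanSpace ℝ (Fin N) :=
      { toFun := fun u => (WithLp.toLp 2 (fun j => B u (EuclideanSpace.single j 1) - lam * u j) :
          EuclideanSpace ℝ (Fin N))
        map_add' := by
          intro a b
          ext j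
          simp only [map_add, ContinuousLinearMap.add_apply, PiLp.add_apply, PiLp.toLp_apply]
          ring
        map_smul' := by
          intro c a
          ext j
          simp only [map_smul, ContinuousLinearMap.smul_apply, PiLp.smul_apply, PiLp.toLp_apply,
            smul_eq_mul, RingHom.id_apply]
          ring } with hS
    have hSapp : ∀ (u : EuclideanSpace ℝ (Fin N)) (j : Fin N),
        S u j = B u (EuclideanSpace.single j 1) - lam * u j := fun u j => rfl
    have hinner : ∀ a c : EuclideanSpace ℝ (Fin N), (inner ℝ a c : ℝ) = ∑ j, a j * c j := by
      intro a c
      simp [PiLp.inner_apply, RCLike.inner_apply, map_sum, mul_comm]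
    have hSsymm : S.IsSymmetric := by
      intro a c
      rw [hinner, hinner]
      have h1 : ∑ j, S a j * c j = B a c - lam * ∑ j, a j * c j := by
        rw [clm_decomp N (B a) c, Finset.mul_sum, ← Finset.sum_sub_distrib]
        refine Finset.sum_congr rfl fun j _ => ?_
        rw [hSapp]; ring
      have h2 : ∑ j, a j * S c j = B c a - lam * ∑ j, a j * c j := by
        rw [clm_decomp N (B c) a, Finset.mul_sum, ← Finset.sum_sub_distrib]
        refine Finset.sum_congr rfl fun j _ => ?_
        rw [hSapp]; ring
      rw [h1, h2, hsymmB x a c]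
    have hSpos : ∀ u : EuclideanSpace ℝ (Fin N), 0 ≤ ∑ i, w i * (u i * S u i) := by
      intro u
      have h := weighted_hess N U hU lam w hmono x u
      have hexp : ∑ i, w i * (u i * S u i) =
          (∑ i, w i * (u i * B u (EuclideanSpace.single i 1)))
            - lam * ∑ i, w i * (u i)^2 := by
        rw [Finset.mul_sum, ← Finset.sum_sub_distrib]
        refine Finset.sum_congr rfl fun i _ => ?_
        rw [hSapp]; ring
      rw [hexp]
      linarith
    have hkey := key_lin N w hw S hSsymm hSpos v
    have hfin : (inner ℝ v (S v) : ℝ) = B v v - lam * ‖v‖ ^ 2 := by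
      rw [hinner]
      have : ∑ j, v j * S v j = B v v - lam * ∑ j, v j * v j := by
        rw [clm_decomp N (B v) v, Finset.mul_sum, ← Finset.sum_sub_distrib]
        refine Finset.sum_congr rfl fun j _ => ?_
        rw [hSapp]; ring
      rw [this]
      have hn : ∑ j, v j * v j = ‖v‖ ^ 2 := by
        rw [← real_inner_self_eq_norm_sq, hinner]
      rw [hn]
    rw [hfin] at hkey
    linarith
  constructor
  · intro x v
    rw [iteratedFDeriv_two_apply]
    simpa using quad x v
  · intro x x'
    set d : EuclideanSpace ℝ (Fin N) := x - x' with hd'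
    set c : ℝ := lam * ‖d‖ ^ 2 with hcc
    set φ : ℝ → ℝ := fun t => fderiv ℝ U (x' + t • d) d - c * t with hφ
    have hφ' : ∀ t : ℝ, HasDerivAt φ (fderiv ℝ (fderiv ℝ U) (x' + t • d) d d - c) t := by
      intro t
      have h2 : HasDerivAt (fun s : ℝ => c * s) c t := by
        simpa using (hasDerivAt_id t).const_mul c
      exact (deriv_along N U hU x' d d t).sub h2
    have hmonoφ : Monotone φ := by
      apply monotone_of_deriv_nonneg
      · exact fun t => (hφ' t).differentiableAt
      · intro t
        rw [(hφ' t).deriv]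
        have := quad (x' + t • d) d
        simp only [hcc]
        linarith
    have h01 := hmonoφ (by norm_num : (0:ℝ) ≤ 1)
    have hφ0 : φ 0 = fderiv ℝ U x' d := by simp [hφ]
    have hone : x' + (1:ℝ) • d = x := by
      rw [hd', one_smul]; abel
    have hφ1 : φ 1 = fderiv ℝ U x d - c := by
      simp only [hφ, mul_one, hone]
    rw [hφ0, hφ1] at h01
    have hgrad : ∀ y : EuclideanSpace ℝ (Fin N),
        (inner ℝ (gradient U y) d : ℝ) = fderiv ℝ U y d := by
      intro y
      exact InnerProductSpace.toDual_symm_apply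
    have : (inner ℝ (x - x') (gradient U x - gradient U x') : ℝ)
        = fderiv ℝ U x d - fderiv ℝ U x' d := by
      rw [← hd', real_inner_comm, inner_sub_left, hgrad, hgrad]
    rw [this]
    linarith
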